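/- Let n ≥ 2 and let U₁, U₂ ∈ ℝ^{n×n} be matrices such that for all Q ∈ SO(n), rank(U₁ - Q·U₂) ≠ 1 and U₁ ≠ Q·U₂. Then there exists d̄ > 0 such that for every Q ∈ SO(n) and every orthonormal set of vectors τ₁, …, τ_{n-1} ∈ ℝⁿ, one has max_{1 ≤ l ≤ n-1} |(U₁ - Q·U₂)·τ_l| ≥ d̄. -/

import Mathlib

open Matrix

def SO (n : ℕ) : Set (Matrix (Fin n) (Fin n) ℝ) :=
  {Q | Q.transpose * Q = 1 ∧ Q.det = 1}

noncomputable def vnorm {n : ℕ} (v : Fin n → ℝ) : ℝ := Real.sqrt (v ⬝ᵥ v)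

lemma aux_dot_self_nonneg {k : ℕ} (v : Fin k → ℝ) : 0 ≤ v ⬝ᵥ v :=
  Finset.sum_nonneg fun i _ => mul_self_nonneg (v i)

/-- Orthonormal families are linearly independent (dot-product version). -/
lemma aux_li {n m : ℕ} (τ : Fin m → Fin n → ℝ)
    (h1 : ∀ l, τ l ⬝ᵥ τ l = 1) (h2 : ∀ l l', l ≠ l' → τ l ⬝ᵥ τ l' = 0) :
    LinearIndependent ℝ τ := by
  rw [Fintype.linearIndependent_iff]
  intro g hg l'
  have h0 : (∑ i, g i • τ i) ⬝ᵥ τ l' = 0 := by rw [hg]; simp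
  have hswap : (∑ i, g i • τ i) ⬝ᵥ τ l' = ∑ i, g i * (τ i ⬝ᵥ τ l') := by
    simp only [dotProduct, Finset.sum_apply, Pi.smul_apply, smul_eq_mul, Finset.sum_mul,
      Finset.mul_sum]
    rw [Finset.sum_comm]
    simp [mul_assoc]
  rw [hswap, Finset.sum_eq_single l' (fun i _ hi => by rw [h2 i l' hi, mul_zero])
    (fun hl' => absurd (Finset.mem_univ l') hl'), h1 l', mul_one] at h0
  exact h0

/-- If a matrix kills an orthonormal family of `n-1` vectors, its rank is at most 1. -/
lemma aux_rank_le_one {n : ℕ} (hn : 2 ≤ n) (B : Matrix (Fin n) (Fin n) ℝ)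
    (τ : Fin (n - 1) → Fin n → ℝ)
    (h1 : ∀ l, τ l ⬝ᵥ τ l = 1) (h2 : ∀ l l', l ≠ l' → τ l ⬝ᵥ τ l' = 0)
    (h0 : ∀ l, B *ᵥ τ l = 0) : B.rank ≤ 1 := by
  have hli := aux_li τ h1 h2
  have hspan : Submodule.span ℝ (Set.range τ) ≤ LinearMap.ker B.mulVecLin := by
    rw [Submodule.span_le]
    rintro x ⟨l, rfl⟩
    simp [LinearMap.mem_ker, Matrix.mulVecLin_apply, h0 l]
  have hspanrank : Module.finrank ℝ (Submodule.span ℝ (Set.range τ)) = n - 1 := by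
    rw [finrank_span_eq_card hli, Fintype.card_fin]
  have hker : n - 1 ≤ Module.finrank ℝ (LinearMap.ker B.mulVecLin) := by
    rw [← hspanrank]
    exact Submodule.finrank_mono hspan
  have hrn := LinearMap.finrank_range_add_finrank_ker B.mulVecLin
  rw [Module.finrank_fin_fun] at hrn
  have : B.rank = Module.finrank ℝ (LinearMap.range B.mulVecLin) := rfl
  omega

theorem stmt_1 (n : ℕ) (hn : 2 ≤ n) (U₁ U₂ : Matrix (Fin n) (Fin n) ℝ)
    (h : ∀ Q ∈ SO n, (U₁ - Q * U₂).rank ≠ 1 ∧ U₁ ≠ Q * U₂) :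
    ∃ d > (0 : ℝ), ∀ Q ∈ SO n, ∀ τ : Fin (n - 1) → Fin n → ℝ,
      (∀ l, τ l ⬝ᵥ τ l = 1) → (∀ l l', l ≠ l' → τ l ⬝ᵥ τ l' = 0) →
      ∃ l, vnorm ((U₁ - Q * U₂).mulVec (τ l)) ≥ d := by
  classical
  have hne1 : Nonempty (Fin (n - 1)) := ⟨⟨0, by omega⟩⟩
  set E := (Matrix (Fin n) (Fin n) ℝ) × (Fin (n - 1) → Fin n → ℝ) with hE
  let f : E → ℝ := fun p =>
    ∑ l, ((U₁ - p.1 * U₂) *ᵥ p.2 l) ⬝ᵥ ((U₁ - p.1 * U₂) *ᵥ p.2 l)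
  have hf : Continuous f := by
    apply continuous_finset_sum
    intro l _
    have hA : Continuous (fun p : E => U₁ - p.1 * U₂) :=
      Continuous.sub continuous_const (continuous_fst.matrix_mul continuous_const)
    have hτ : Continuous fun p : E => p.2 l := (continuous_apply l).comp continuous_snd
    exact (hA.matrix_mulVec hτ).dotProduct (hA.matrix_mulVec hτ)
  let S : Set E := {p | (p.1ᵀ * p.1 = 1 ∧ p.1.det = 1) ∧ (∀ l, p.2 l ⬝ᵥ p.2 l = 1) ∧
    (∀ l l', l ≠ l' → p.2 l ⬝ᵥ p.2 l' = 0)}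
  -- S is closed
  have hSclosed : IsClosed S := by
    have e1 : IsClosed {p : E | p.1ᵀ * p.1 = 1} :=
      isClosed_eq (continuous_fst.matrix_transpose.matrix_mul continuous_fst) continuous_const
    have e2 : IsClosed {p : E | p.1.det = 1} :=
      isClosed_eq continuous_fst.matrix_det continuous_const
    have e3 : IsClosed {p : E | ∀ l, p.2 l ⬝ᵥ p.2 l = 1} := by
      have : {p : E | ∀ l, p.2 l ⬝ᵥ p.2 l = 1} = ⋂ l, {p : E | p.2 l ⬝ᵥ p.2 l = 1} := by
        ext p; simp
      rw [this]
      exact isClosed_iInter fun l => isClosed_eq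
        (Continuous.dotProduct ((continuous_apply l).comp continuous_snd)
          ((continuous_apply l).comp continuous_snd)) continuous_const
    have e4 : IsClosed {p : E | ∀ l l', l ≠ l' → p.2 l ⬝ᵥ p.2 l' = 0} := by
      have : {p : E | ∀ l l', l ≠ l' → p.2 l ⬝ᵥ p.2 l' = 0} =
          ⋂ l, ⋂ l', ⋂ _ : l ≠ l', {p : E | p.2 l ⬝ᵥ p.2 l' = 0} := by
        ext p; simp
      rw [this]
      exact isClosed_iInter fun l => isClosed_iInter fun l' => isClosed_iInter fun _ =>
        isClosed_eq (Continuous.dotProduct ((continuous_apply l).comp continuous_snd)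
          ((continuous_apply l').comp continuous_snd)) continuous_const
    have hS : S = ({p : E | p.1ᵀ * p.1 = 1} ∩ {p : E | p.1.det = 1}) ∩
        ({p : E | ∀ l, p.2 l ⬝ᵥ p.2 l = 1} ∩ {p : E | ∀ l l', l ≠ l' → p.2 l ⬝ᵥ p.2 l' = 0}) := by
      ext p
      constructor
      · rintro ⟨⟨a, b⟩, c, d⟩; exact ⟨⟨a, b⟩, c, d⟩
      · rintro ⟨⟨a, b⟩, c, d⟩; exact ⟨⟨a, b⟩, c, d⟩
    rw [hS]
    exact ((e1.inter e2).inter (e3.inter e4))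
  -- S is contained in a compact box
  have hScompact : IsCompact S := by
    set K₁ : Set (Matrix (Fin n) (Fin n) ℝ) :=
      Set.univ.pi fun _ : Fin n => Set.univ.pi fun _ : Fin n => Set.Icc (-1 : ℝ) 1 with hK₁
    set K₂ : Set (Fin (n - 1) → Fin n → ℝ) :=
      Set.univ.pi fun _ : Fin (n - 1) => Set.univ.pi fun _ : Fin n => Set.Icc (-1 : ℝ) 1 with hK₂
    have hK₁c : IsCompact K₁ :=
      isCompact_univ_pi fun _ => isCompact_univ_pi fun _ => isCompact_Icc
    have hK₂c : IsCompact K₂ :=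
      isCompact_univ_pi fun _ => isCompact_univ_pi fun _ => isCompact_Icc
    have hsub : S ⊆ K₁ ×ˢ K₂ := by
      rintro ⟨Q, τ⟩ ⟨⟨hQ, _⟩, hτ1, _⟩
      constructor
      · intro i _
        intro j _
        have hdiag : ∑ k, Q k j * Q k j = 1 := by
          have := congrFun (congrFun hQ j) j
          simpa [Matrix.mul_apply, Matrix.transpose_apply, Matrix.one_apply_eq] using this
        have hle : Q i j * Q i j ≤ 1 := by
          rw [← hdiag]
          exact Finset.single_le_sum (fun k _ => mul_self_nonneg (Q k j)) (Finset.mem_univ i)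
        have := abs_le_one_iff_mul_self_le_one.mpr hle
        exact abs_le.mp this
      · intro l _
        intro i _
        have hdiag : ∑ k, τ l k * τ l k = 1 := hτ1 l
        have hle : τ l i * τ l i ≤ 1 := by
          rw [← hdiag]
          exact Finset.single_le_sum (fun k _ => mul_self_nonneg (τ l k)) (Finset.mem_univ i)
        exact abs_le.mp (abs_le_one_iff_mul_self_le_one.mpr hle)
    exact (hK₁c.prod hK₂c).of_isClosed_subset hSclosed hsub
  -- S is nonempty
  have hSne : S.Nonempty := by
    refine ⟨⟨1, fun l => Pi.single (Fin.castLE (by omega) l) 1⟩, ⟨?_, ?_⟩, ?_, ?_⟩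
    · simp
    · simp
    · intro l
      simp [single_dotProduct]
    · intro l l' hll'
      simp only [single_dotProduct, one_mul, Pi.single_apply]
      rw [if_neg]
      intro hc
      exact hll' (by simpa using hc)
  -- minimum of f on S
  obtain ⟨p₀, hp₀S, hp₀min⟩ := hScompact.exists_isMinOn hSne hf.continuousOn
  set m := f p₀ with hm_def
  have hm : 0 < m := by
    rcases lt_or_eq_of_le (Finset.sum_nonneg fun l _ =>
      aux_dot_self_nonneg ((U₁ - p₀.1 * U₂) *ᵥ p₀.2 l)) with hlt | heq
    · exact hlt
    · exfalso
      have hzero : ∀ l, (U₁ - p₀.1 * U₂) *ᵥ p₀.2 l = 0 := by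
        intro l
        have := (Finset.sum_eq_zero_iff_of_nonneg fun l _ =>
          aux_dot_self_nonneg ((U₁ - p₀.1 * U₂) *ᵥ p₀.2 l)).mp heq.symm l (Finset.mem_univ l)
        exact dotProduct_self_eq_zero.mp this
      have hQSO : p₀.1 ∈ SO n := ⟨hp₀S.1.1, hp₀S.1.2⟩
      have hrank := aux_rank_le_one hn (U₁ - p₀.1 * U₂) p₀.2 hp₀S.2.1 hp₀S.2.2 hzero
      have hr0 : (U₁ - p₀.1 * U₂).rank = 0 := by
        have := (h p₀.1 hQSO).1
        omega
      have hbot : LinearMap.range (U₁ - p₀.1 * U₂).mulVecLin = ⊥ :=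
        Submodule.finrank_eq_zero.mp hr0
      have hz : (U₁ - p₀.1 * U₂).mulVecLin = 0 := LinearMap.range_eq_bot.mp hbot
      have hB0 : U₁ - p₀.1 * U₂ = 0 := by
        ext i j
        have := congrFun (congrArg (fun g => g.toFun) hz) (Pi.single j 1)
        have h2 : (U₁ - p₀.1 * U₂) *ᵥ Pi.single j 1 = 0 := this
        have := congrFun h2 i
        simpa [Matrix.mulVec_single] using this
      exact (h p₀.1 hQSO).2 (by rw [← sub_eq_zero]; exact hB0)
  have hcard : (0 : ℝ) < ((n - 1 : ℕ) : ℝ) := by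
    have : 1 ≤ n - 1 := by omega
    exact_mod_cast Nat.lt_of_lt_of_le Nat.zero_lt_one this
  refine ⟨Real.sqrt (m / ((n - 1 : ℕ) : ℝ)), Real.sqrt_pos.mpr (div_pos hm hcard), ?_⟩
  intro Q hQ τ hτ1 hτ2
  have hmem : (⟨Q, τ⟩ : E) ∈ S := ⟨⟨hQ.1, hQ.2⟩, hτ1, hτ2⟩
  have hge : m ≤ f ⟨Q, τ⟩ := hp₀min hmem
  have hex : ∃ l, m / ((n - 1 : ℕ) : ℝ) ≤
      ((U₁ - Q * U₂) *ᵥ τ l) ⬝ᵥ ((U₁ - Q * U₂) *ᵥ τ l) := by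
    by_contra hc
    push_neg at hc
    have hsum : f ⟨Q, τ⟩ < ∑ _l : Fin (n - 1), m / ((n - 1 : ℕ) : ℝ) :=
      Finset.sum_lt_sum_of_nonempty Finset.univ_nonempty fun l _ => hc l
    rw [Finset.sum_const, Finset.card_univ, Fintype.card_fin, nsmul_eq_mul,
      mul_div_cancel₀ _ (ne_of_gt hcard)] at hsum
    exact absurd hge (not_le.mpr hsum)
  obtain ⟨l, hl⟩ := hex
  refine ⟨l, ?_⟩
  exact Real.sqrt_le_sqrt hl
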